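/- arXiv:1711.01540 — 3 statements merged into one kernel-verified Lean document; each statement's English description precedes it below -/
import Mathlib

section
/- Let T = M_w E M_u be a bounded operator on L^p(F). Then ker(T^2) = ker(T^{n+2}) for every n ≥ 1; in particular the ascent of T is at most 2. -/
open MeasureTheory
open scoped ENNReal

theorem wce_ascent_le_two {X : Type*} {m m0 : MeasurableSpace X} (hm : m ≤ m0)
    (μ : Measure X) [μ.IsComplete] [SigmaFinite μ] [SigmaFinite (μ.trim hm)]
    (u w : X → ℝ) (p : ℝ≥0∞) [Fact (1 ≤ p)]
    (T : Lp ℝ p μ →L[ℝ] Lp ℝ p μ)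
    (hT : ∀ f : Lp ℝ p μ, (T f : X → ℝ) =ᵐ[μ]
      fun x => w x * (μ[fun y => u y * (f : X → ℝ) y | m]) x) :
    (∀ n : ℕ, 1 ≤ n → LinearMap.ker (((T ^ 2 : Lp ℝ p μ →L[ℝ] Lp ℝ p μ)) : Lp ℝ p μ →ₗ[ℝ] Lp ℝ p μ) = LinearMap.ker (((T ^ (n + 2) : Lp ℝ p μ →L[ℝ] Lp ℝ p μ)) : Lp ℝ p μ →ₗ[ℝ] Lp ℝ p μ)) ∧
      LinearMap.ker (((T ^ 2 : Lp ℝ p μ →L[ℝ] Lp ℝ p μ)) : Lp ℝ p μ →ₗ[ℝ] Lp ℝ p μ) = LinearMap.ker (((T ^ 3 : Lp ℝ p μ →L[ℝ] Lp ℝ p μ)) : Lp ℝ p μ →ₗ[ℝ] Lp ℝ p μ) := by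
  -- key step : ker T^3 ⊆ ker T^2 elementwise
  have key : ∀ f : Lp ℝ p μ, T (T (T f)) = 0 → T (T f) = 0 := by
    by_cases hint : ∀ g : Lp ℝ p μ, Integrable (fun x => u x * (g : X → ℝ) x) μ
    · -- integrable case
      intro f h3
      set g := T f with hgdef
      set k := T g with hkdef
      set H : X → ℝ := μ[fun y => u y * (f : X → ℝ) y | m] with hHdef
      set φ : X → ℝ := μ[fun y => u y * (g : X → ℝ) y | m] with hφdef
      set ψ : X → ℝ := μ[fun y => u y * (k : X → ℝ) y | m] with hψdef
      have hgae : (g : X → ℝ) =ᵐ[μ] fun x => w x * H x := hT f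
      have hkae : (k : X → ℝ) =ᵐ[μ] fun x => w x * φ x := hT g
      have hTk0 : (fun x => w x * ψ x) =ᵐ[μ] (0 : X → ℝ) := by
        have h1 : (T k : X → ℝ) =ᵐ[μ] fun x => w x * ψ x := hT k
        have h2 : T k = 0 := h3
        rw [h2] at h1
        exact ((Lp.coeFn_zero ℝ p μ).symm.trans h1).symm
      have hHm : StronglyMeasurable[m] H := stronglyMeasurable_condExp
      have hφm : StronglyMeasurable[m] φ := stronglyMeasurable_condExp
      -- the key identity φ^2 = H ψ a.e.
      have hsq : ∀ᵐ x ∂μ, φ x * φ x = H x * ψ x := by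
        have hAll : ∀ n : ℕ, ∀ᵐ x ∂μ,
            (‖H x‖ ≤ (n : ℝ) ∧ ‖φ x‖ ≤ (n : ℝ)) → φ x * φ x = H x * ψ x := by
          intro n
          set s : Set X := {x | ‖H x‖ ≤ (n : ℝ)} ∩ {x | ‖φ x‖ ≤ (n : ℝ)} with hsdef
          have hsm : MeasurableSet[m] s :=
            (hHm.norm.measurableSet_le stronglyMeasurable_const).inter
              (hφm.norm.measurableSet_le stronglyMeasurable_const)
          set b1 : X → ℝ := s.indicator φ with hb1def
          set b2 : X → ℝ := s.indicator H with hb2def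
          have hb1m : StronglyMeasurable[m] b1 := hφm.indicator hsm
          have hb2m : StronglyMeasurable[m] b2 := hHm.indicator hsm
          have hb1bd : ∀ x, ‖b1 x‖ ≤ (n : ℝ) := by
            intro x
            by_cases hx : x ∈ s
            · rw [hb1def, Set.indicator_of_mem hx]
              exact hx.2
            · rw [hb1def, Set.indicator_of_notMem hx]
              simp
          have hb2bd : ∀ x, ‖b2 x‖ ≤ (n : ℝ) := by
            intro x
            by_cases hx : x ∈ s
            · rw [hb2def, Set.indicator_of_mem hx]
              exact hx.1
            · rw [hb2def, Set.indicator_of_notMem hx]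
              simp
          have hIg := hint g
          have hIk := hint k
          have hIb1g : Integrable (b1 * fun x => u x * (g : X → ℝ) x) μ :=
            hIg.bdd_mul ((hb1m.mono hm).aestronglyMeasurable)
              (Filter.Eventually.of_forall hb1bd)
          have hIb2k : Integrable (b2 * fun x => u x * (k : X → ℝ) x) μ :=
            hIk.bdd_mul ((hb2m.mono hm).aestronglyMeasurable)
              (Filter.Eventually.of_forall hb2bd)
          have E1 : μ[b1 * fun x => u x * (g : X → ℝ) x|m]
              =ᵐ[μ] b1 * μ[fun x => u x * (g : X → ℝ) x|m] :=
            condExp_mul_of_stronglyMeasurable_left hb1m hIb1g hIg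
          have E2 : μ[b2 * fun x => u x * (k : X → ℝ) x|m]
              =ᵐ[μ] b2 * μ[fun x => u x * (k : X → ℝ) x|m] :=
            condExp_mul_of_stronglyMeasurable_left hb2m hIb2k hIk
          have hcongr : (b1 * fun x => u x * (g : X → ℝ) x)
              =ᵐ[μ] (b2 * fun x => u x * (k : X → ℝ) x) := by
            filter_upwards [hgae, hkae] with x hgx hkx
            by_cases hx : x ∈ s
            · simp only [Pi.mul_apply, hb1def, hb2def, Set.indicator_of_mem hx, hgx, hkx]
              ring
            · simp only [Pi.mul_apply, hb1def, hb2def, Set.indicator_of_notMem hx, zero_mul]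
          have Emid : μ[b1 * fun x => u x * (g : X → ℝ) x|m]
              =ᵐ[μ] μ[b2 * fun x => u x * (k : X → ℝ) x|m] := condExp_congr_ae hcongr
          have final : (b1 * φ) =ᵐ[μ] (b2 * ψ) :=
            (E1.symm.trans Emid).trans E2
          filter_upwards [final] with x hx hmem
          have hxs : x ∈ s := ⟨hmem.1, hmem.2⟩
          simpa only [Pi.mul_apply, hb1def, hb2def, Set.indicator_of_mem hxs] using hx
        rw [← ae_all_iff] at hAll
        filter_upwards [hAll] with x hx
        refine hx (Nat.ceil (max ‖H x‖ ‖φ x‖)) ⟨?_, ?_⟩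
        · exact le_trans (le_max_left _ _) (Nat.le_ceil _)
        · exact le_trans (le_max_right _ _) (Nat.le_ceil _)
      -- conclude k = 0
      have hk0 : (k : X → ℝ) =ᵐ[μ] 0 := by
        filter_upwards [hkae, hTk0, hsq] with x h1 h2 h3
        simp only [Pi.zero_apply] at h2 ⊢
        rcases mul_eq_zero.mp h2 with hw | hψ0
        · rw [h1, hw, zero_mul]
        · rw [hψ0, mul_zero] at h3
          have hφ0 : φ x = 0 := by
            have := mul_self_eq_zero.mp h3
            exact this
          rw [h1, hφ0, mul_zero]
      exact Lp.eq_zero_iff_ae_eq_zero.mpr hk0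
    · -- some u·g non-integrable : T = 0
      have hzero_of : ∀ g : Lp ℝ p μ,
          ¬ Integrable (fun x => u x * (g : X → ℝ) x) μ → T g = 0 := by
        intro g hg
        have h1 := hT g
        rw [condExp_of_not_integrable hg] at h1
        refine Lp.eq_zero_iff_ae_eq_zero.mpr (h1.trans ?_)
        filter_upwards with x
        simp
      push_neg at hint
      obtain ⟨f₁, hf₁⟩ := hint
      have hTf₁ : T f₁ = 0 := hzero_of f₁ hf₁
      have hTzero : ∀ g : Lp ℝ p μ, T g = 0 := by
        intro g
        by_cases hg : Integrable (fun x => u x * (g : X → ℝ) x) μ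
        · have hadd : ¬ Integrable (fun x => u x * ((f₁ + g : Lp ℝ p μ) : X → ℝ) x) μ := by
            intro hI
            apply hf₁
            have hco : ((f₁ + g : Lp ℝ p μ) : X → ℝ) =ᵐ[μ] (f₁ : X → ℝ) + (g : X → ℝ) :=
              Lp.coeFn_add f₁ g
            have hI' : Integrable (fun x => u x * ((f₁ : X → ℝ) x + (g : X → ℝ) x)) μ := by
              refine hI.congr ?_
              filter_upwards [hco] with x hx
              rw [hx]; rfl
            have hsub := hI'.sub hg
            refine hsub.congr ?_
            filter_upwards with x
            simp only [Pi.sub_apply]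
            ring
          have h0 := hzero_of _ hadd
          rw [map_add, hTf₁, zero_add] at h0
          exact h0
        · exact hzero_of g hg
      intro f _
      exact hTzero (T f)
  -- application of powers
  have happ : ∀ (n : ℕ) (f : Lp ℝ p μ), (T ^ (n + 1)) f = T ((T ^ n) f) := by
    intro n f
    rw [pow_succ']
    rfl
  -- main induction
  have main : ∀ n : ℕ, LinearMap.ker (((T ^ 2 : Lp ℝ p μ →L[ℝ] Lp ℝ p μ)) : Lp ℝ p μ →ₗ[ℝ] Lp ℝ p μ) = LinearMap.ker (((T ^ (n + 2) : Lp ℝ p μ →L[ℝ] Lp ℝ p μ)) : Lp ℝ p μ →ₗ[ℝ] Lp ℝ p μ) := by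
    intro n
    induction n with
    | zero => rfl
    | succ n ih =>
      apply le_antisymm
      · intro f hf
        have h2 : (T ^ 2) f = 0 := hf
        have hpow : T ^ (n + 1 + 2) = T ^ (n + 1) * T ^ 2 := by rw [← pow_add]
        have : (T ^ (n + 1 + 2)) f = 0 := by
          rw [hpow, ContinuousLinearMap.mul_apply, h2, map_zero]
        exact this
      · intro f hf
        have h3 : (T ^ (n + 3)) f = 0 := hf
        have e : (T ^ (n + 3)) f = T (T (T ((T ^ n) f))) := by
          rw [show n + 3 = (n + 2) + 1 from rfl, happ (n + 2),
            show n + 2 = (n + 1) + 1 from rfl, happ (n + 1), happ n]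
        have h2' : T (T ((T ^ n) f)) = 0 := key _ (by rw [← e]; exact h3)
        have hmem : f ∈ LinearMap.ker (((T ^ (n + 2) : Lp ℝ p μ →L[ℝ] Lp ℝ p μ)) : Lp ℝ p μ →ₗ[ℝ] Lp ℝ p μ) := by
          have : (T ^ (n + 2)) f = 0 := by
            rw [show n + 2 = (n + 1) + 1 from rfl, happ (n + 1), happ n]
            exact h2'
          exact this
        rw [← ih] at hmem
        exact hmem
  exact ⟨fun n _ => main n, main 1⟩
end

section
/- Let T = M_w E M_u be a bounded operator on L^p(F). If E(uw) is bounded away from zero on its support in the sense that there exists C > 0 with |E(uw)| ≥ C almost everywhere (on X), then range(T^2) = range(T^{n+2}) for every n ≥ 1; consequently the descent of T is at most 2. -/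
open MeasureTheory
open scoped ENNReal

lemma wce_aux {X : Type*} {m m0 : MeasurableSpace X} (hm : m ≤ m0)
    (μ : Measure X) [SigmaFinite (μ.trim hm)]
    (u w : X → ℝ) (p : ℝ≥0∞) [Fact (1 ≤ p)]
    (T : Lp ℝ p μ →L[ℝ] Lp ℝ p μ)
    (hT : ∀ f : Lp ℝ p μ, (T f : X → ℝ) =ᵐ[μ]
      fun x => w x * (μ[fun y => u y * (f : X → ℝ) y | m]) x)
    {C : ℝ} (hC : 0 < C)
    (hb : ∀ᵐ x ∂μ, C ≤ |(μ[fun y => u y * w y | m]) x|)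
    (f : Lp ℝ p μ) : ∃ h : Lp ℝ p μ, T (T (T h)) = T (T f) := by
  set e : X → ℝ := μ[fun y => u y * w y | m] with he
  by_cases huw : Integrable (fun y => u y * w y) μ
  · by_cases hintf : Integrable (fun y => u y * (f : X → ℝ) y) μ
    · set η : X → ℝ := μ[fun y => u y * (f : X → ℝ) y | m] with hη
      have hηm : StronglyMeasurable[m] η := stronglyMeasurable_condExp
      have hηint : Integrable η μ := integrable_condExp
      have hTf : (T f : X → ℝ) =ᵐ[μ] fun x => w x * η x := hT f
      by_cases h2 : Integrable (fun x => u x * w x * η x) μ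
      · -- main case
        have hem : StronglyMeasurable[m] e := stronglyMeasurable_condExp
        set c : X → ℝ := fun x => (e x)⁻¹ with hc
        have hcm : StronglyMeasurable[m] c :=
          (hem.measurable.inv).stronglyMeasurable
        have hcm0 : StronglyMeasurable c := hcm.mono hm
        have hcbd : ∀ᵐ x ∂μ, |c x| ≤ C⁻¹ := by
          filter_upwards [hb] with x hx
          rw [hc, abs_inv]
          exact inv_anti₀ hC hx
        have hne : ∀ᵐ x ∂μ, c x * e x = 1 := by
          filter_upwards [hb] with x hx
          have : e x ≠ 0 := by
            intro h0
            rw [h0, abs_zero] at hx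
            exact absurd (lt_of_lt_of_le hC hx) (lt_irrefl 0)
          exact inv_mul_cancel₀ this
        -- h := c * f in Lp
        have hmem : MemLp (fun x => c x * (f : X → ℝ) x) p μ := by
          refine MemLp.of_le_mul (c := C⁻¹) (Lp.memLp f)
            (hcm0.aestronglyMeasurable.mul (Lp.aestronglyMeasurable f)) ?_
          filter_upwards [hcbd] with x hx
          rw [norm_mul]
          exact mul_le_mul_of_nonneg_right ((Real.norm_eq_abs _) ▸ hx) (norm_nonneg _)
        set h : Lp ℝ p μ := hmem.toLp _ with hhdef
        have hh : (h : X → ℝ) =ᵐ[μ] fun x => c x * (f : X → ℝ) x := hmem.coeFn_toLp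
        -- Step A : μ[u * h | m] =ᵐ c * η
        have hintA : Integrable (c * fun y => u y * (f : X → ℝ) y) μ := by
          refine Integrable.mono' (hintf.norm.const_mul C⁻¹)
            (hcm0.aestronglyMeasurable.mul hintf.1) ?_
          filter_upwards [hcbd] with x hx
          simp only [Pi.mul_apply, norm_mul, Real.norm_eq_abs]
          exact mul_le_mul_of_nonneg_right hx (mul_nonneg (abs_nonneg _) (abs_nonneg _))
        have hstepA : (μ[fun y => u y * (h : X → ℝ) y | m]) =ᵐ[μ]
            fun x => c x * η x := by
          have h1 : (fun y => u y * (h : X → ℝ) y) =ᵐ[μ]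
              (c * fun y => u y * (f : X → ℝ) y) := by
            filter_upwards [hh] with x hx
            simp only [Pi.mul_apply]
            rw [hx]; ring
          calc (μ[fun y => u y * (h : X → ℝ) y | m])
              =ᵐ[μ] (μ[(c * fun y => u y * (f : X → ℝ) y) | m]) := condExp_congr_ae h1
            _ =ᵐ[μ] c * (μ[fun y => u y * (f : X → ℝ) y | m]) :=
                condExp_mul_of_stronglyMeasurable_left hcm hintA hintf
            _ = fun x => c x * η x := rfl
        -- Step B : T h =ᵐ w * (c * η)
        have hstepB : (T h : X → ℝ) =ᵐ[μ] fun x => w x * (c x * η x) := by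
          filter_upwards [hT h, hstepA] with x hx1 hx2
          rw [hx1, hx2]
        -- Step C : μ[u * T h | m] =ᵐ η
        have hintC : Integrable ((fun x => c x * η x) * fun y => u y * w y) μ := by
          refine Integrable.mono' (h2.norm.const_mul C⁻¹)
            ((hcm0.aestronglyMeasurable.mul (hηm.mono hm).aestronglyMeasurable).mul huw.1) ?_
          filter_upwards [hcbd] with x hx
          simp only [Pi.mul_apply, norm_mul, Real.norm_eq_abs]
          calc |c x| * |η x| * (|u x| * |w x|) ≤ C⁻¹ * |η x| * (|u x| * |w x|) := by
                apply mul_le_mul_of_nonneg_right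
                  (mul_le_mul_of_nonneg_right hx (abs_nonneg _))
                  (mul_nonneg (abs_nonneg _) (abs_nonneg _))
            _ = C⁻¹ * (|u x| * |w x| * |η x|) := by ring
        have hstepC : (μ[fun y => u y * (T h : X → ℝ) y | m]) =ᵐ[μ] η := by
          have h1 : (fun y => u y * (T h : X → ℝ) y) =ᵐ[μ]
              ((fun x => c x * η x) * fun y => u y * w y) := by
            filter_upwards [hstepB] with x hx
            simp only [Pi.mul_apply]
            rw [hx]; ring
          calc (μ[fun y => u y * (T h : X → ℝ) y | m])
              =ᵐ[μ] (μ[((fun x => c x * η x) * fun y => u y * w y) | m]) :=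
                condExp_congr_ae h1
            _ =ᵐ[μ] (fun x => c x * η x) * (μ[fun y => u y * w y | m]) :=
                condExp_mul_of_stronglyMeasurable_left (hcm.mul hηm) hintC huw
            _ =ᵐ[μ] η := by
                filter_upwards [hne] with x hx
                simp only [Pi.mul_apply, ← he]
                calc c x * η x * e x = (c x * e x) * η x := by ring
                  _ = η x := by rw [hx, one_mul]
        -- Step D : T (T h) = T f
        have hstepD : T (T h) = T f := by
          apply Lp.ext
          filter_upwards [hT (T h), hstepC, hTf] with x hx1 hx2 hx3
          rw [hx1, hx2, hx3]
        exact ⟨h, by rw [hstepD]⟩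
      · -- T (T f) = 0
        have hcongr : (fun y => u y * (T f : X → ℝ) y) =ᵐ[μ]
            (fun x => u x * w x * η x) := by
          filter_upwards [hTf] with x hx
          rw [hx]; ring
        have hnotint : ¬ Integrable (fun y => u y * (T f : X → ℝ) y) μ := by
          intro hcon
          exact h2 (hcon.congr hcongr)
        have hzero : μ[fun y => u y * (T f : X → ℝ) y | m] = 0 := condExp_of_not_integrable hnotint
        have hTTf : T (T f) = 0 := by
          rw [Lp.eq_zero_iff_ae_eq_zero]
          filter_upwards [hT (T f)] with x hx
          rw [hx, hzero]
          simp
        exact ⟨0, by rw [hTTf]; simp⟩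
    · -- T f = 0
      have hzero : μ[fun y => u y * (f : X → ℝ) y | m] = 0 := condExp_of_not_integrable hintf
      have hTf0 : T f = 0 := by
        rw [Lp.eq_zero_iff_ae_eq_zero]
        filter_upwards [hT f] with x hx
        rw [hx, hzero]
        simp
      exact ⟨0, by rw [hTf0]; simp⟩
  · -- μ must be trivial
    have he0 : e = 0 := condExp_of_not_integrable huw
    have h0 : ∀ᵐ _x ∂μ, False := by
      filter_upwards [hb] with x hx
      rw [he0] at hx
      simp at hx
      exact absurd (lt_of_lt_of_le hC hx) (lt_irrefl 0)
    exact ⟨f, Lp.ext (h0.mono fun x hx => hx.elim)⟩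

theorem wce_descent_le_two {X : Type*} {m m0 : MeasurableSpace X} (hm : m ≤ m0)
    (μ : Measure X) [μ.IsComplete] [SigmaFinite μ] [SigmaFinite (μ.trim hm)]
    (u w : X → ℝ) (p : ℝ≥0∞) [Fact (1 ≤ p)]
    (T : Lp ℝ p μ →L[ℝ] Lp ℝ p μ)
    (hT : ∀ f : Lp ℝ p μ, (T f : X → ℝ) =ᵐ[μ]
      fun x => w x * (μ[fun y => u y * (f : X → ℝ) y | m]) x)
    (hbdd : ∃ C : ℝ, 0 < C ∧ ∀ᵐ x ∂μ, C ≤ |(μ[fun y => u y * w y | m]) x|) :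
    (∀ n : ℕ, 1 ≤ n → LinearMap.range (T ^ 2).toLinearMap = LinearMap.range (T ^ (n + 2)).toLinearMap) ∧
      LinearMap.range (T ^ 2).toLinearMap = LinearMap.range (T ^ 3).toLinearMap := by
  obtain ⟨C, hC, hb⟩ := hbdd
  have aux : ∀ f : Lp ℝ p μ, ∃ h : Lp ℝ p μ, T (T (T h)) = T (T f) :=
    wce_aux hm μ u w p T hT hC hb
  have key : ∀ n : ℕ, LinearMap.range (T ^ 2).toLinearMap = LinearMap.range (T ^ (n + 2)).toLinearMap := by
    intro n
    induction n with
    | zero => rfl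
    | succ k ih =>
      apply le_antisymm
      · intro x hx
        rw [ih] at hx
        obtain ⟨g, hg⟩ := hx
        obtain ⟨h, hh⟩ := aux g
        refine ⟨h, ?_⟩
        have h3 : (T ^ 3) h = (T ^ 2) g := by
          simpa [pow_succ, ContinuousLinearMap.mul_apply] using hh
        have e1 : (T ^ (k + 1 + 2)) h = (T ^ k) ((T ^ 3) h) := by
          rw [show k + 1 + 2 = k + 3 from rfl, pow_add, ContinuousLinearMap.mul_apply]
        show (T ^ (k + 1 + 2)) h = x
        rw [e1, h3, ← ContinuousLinearMap.mul_apply, ← pow_add]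
        exact hg
      · rintro x ⟨g, hg⟩
        refine ⟨(T ^ (k + 1)) g, ?_⟩
        show (T ^ 2) ((T ^ (k + 1)) g) = x
        rw [← ContinuousLinearMap.mul_apply, ← pow_add, show 2 + (k + 1) = k + 1 + 2 from by ring]
        exact hg
  exact ⟨fun n _ => key n, key 1⟩
end

section
/- Let T = M_w E M_u be a nonzero bounded operator on L^p(F). If T is power bounded, then |E(uw)| ≤ 1 almost everywhere (equivalently ‖E(uw)‖_∞ ≤ 1). -/
open MeasureTheory Set Filter
open scoped ENNReal Topology

private lemma clamp_aux {t : ℝ} (h : max (min t 1) (-1) * t = 0) : t = 0 := by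
  by_contra hne
  rcases lt_or_gt_of_ne hne with hlt | hlt
  · have hθ : max (min t 1) (-1) < 0 := max_lt ((min_le_left _ _).trans_lt hlt) (by norm_num)
    exact absurd h (ne_of_gt (mul_pos_of_neg_of_neg hθ hlt))
  · have hθ : 0 < max (min t 1) (-1) := lt_of_lt_of_le (lt_min hlt one_pos) (le_max_left _ _)
    exact absurd h (ne_of_gt (mul_pos hθ hlt))

private lemma clamp_meas {X : Type*} {m : MeasurableSpace X} {f : X → ℝ}
    (hf : Measurable[m] f) : Measurable[m] fun x => max (min (f x) 1) (-1) :=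
  (hf.min measurable_const).max measurable_const

private lemma mset_abs_le {X : Type*} {m : MeasurableSpace X} {f : X → ℝ}
    (hf : Measurable[m] f) (c : ℝ) : MeasurableSet[m] {x | |f x| ≤ c} :=
  measurableSet_le hf.abs measurable_const

private lemma mset_lt_abs {X : Type*} {m : MeasurableSpace X} {f : X → ℝ}
    (hf : Measurable[m] f) (c : ℝ) : MeasurableSet[m] {x | c < |f x|} :=
  measurableSet_lt measurable_const hf.abs

private lemma mset_le_abs {X : Type*} {m : MeasurableSpace X} {f : X → ℝ}
    (hf : Measurable[m] f) (c : ℝ) : MeasurableSet[m] {x | c ≤ |f x|} :=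
  measurableSet_le measurable_const hf.abs

private lemma condexp_ae_zero_of_mul_ae_zero {X : Type*} {m m0 : MeasurableSpace X}
    {μ : Measure X} {g : X → ℝ} (hg : Integrable g μ)
    (h0 : (fun x => g x * (μ[g|m]) x) =ᵐ[μ] 0) : μ[g|m] =ᵐ[μ] 0 := by
  have hθm : StronglyMeasurable[m] (fun x => max (min ((μ[g|m]) x) 1) (-1)) :=
    (clamp_meas stronglyMeasurable_condExp.measurable).stronglyMeasurable
  have hθg : (fun x => max (min ((μ[g|m]) x) 1) (-1)) * g =ᵐ[μ] 0 := by
    filter_upwards [h0] with x hx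
    have hx' : g x * (μ[g|m]) x = 0 := hx
    rcases mul_eq_zero.1 hx' with h | h
    · simp [h]
    · simp [h]
  have hintθ : Integrable ((fun x => max (min ((μ[g|m]) x) 1) (-1)) * g) μ :=
    (integrable_zero _ _ _).congr hθg.symm
  have h1 : μ[(fun x => max (min ((μ[g|m]) x) 1) (-1)) * g|m] =ᵐ[μ]
      (fun x => max (min ((μ[g|m]) x) 1) (-1)) * μ[g|m] :=
    condExp_mul_of_stronglyMeasurable_left hθm hintθ hg
  have h2 : μ[(fun x => max (min ((μ[g|m]) x) 1) (-1)) * g|m] =ᵐ[μ] 0 := by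
    refine (condExp_congr_ae hθg).trans ?_
    rw [condExp_zero]
  have h3 : (fun x => max (min ((μ[g|m]) x) 1) (-1)) * μ[g|m] =ᵐ[μ] 0 := h1.symm.trans h2
  filter_upwards [h3] with x hx
  exact clamp_aux hx

private lemma measure_eq_zero_of_wmul_ae_zero {X : Type*} {m m0 : MeasurableSpace X} (hm : m ≤ m0)
    (μ : Measure X) [SigmaFinite (μ.trim hm)] (u w w' : X → ℝ) (B : Set X)
    (hw'meas : Measurable w')
    (hint : Integrable (fun x => u x * w x) μ)
    (huw' : (fun x => u x * w' x) =ᵐ[μ] fun x => u x * w x)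
    (hBm : MeasurableSet[m] B) (hBfin : μ B ≠ ∞)
    (hwφ : ∀ k : ℕ, (fun x =>
      w x * (μ[((B ∩ {x | |w' x| ≤ (k : ℝ)}).indicator fun x => u x * w' x)|m]) x) =ᵐ[μ] 0)
    (hB1 : ∀ x ∈ B, 1 < |(μ[fun y => u y * w y|m]) x|) : μ B = 0 := by
  have huw'int : Integrable (fun x => u x * w' x) μ := hint.congr huw'.symm
  have hAkm0 : ∀ k : ℕ, MeasurableSet (B ∩ {x | |w' x| ≤ (k : ℝ)}) := fun k =>
    (hm _ hBm).inter (measurableSet_le hw'meas.abs measurable_const)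
  have hqint : ∀ k : ℕ,
      Integrable ((B ∩ {x | |w' x| ≤ (k : ℝ)}).indicator fun x => u x * w' x) μ := fun k =>
    huw'int.indicator (hAkm0 k)
  -- step 1 : the conditional expectations vanish
  have hφ0 : ∀ k : ℕ,
      μ[((B ∩ {x | |w' x| ≤ (k : ℝ)}).indicator fun x => u x * w' x)|m] =ᵐ[μ] 0 := by
    intro k
    refine condexp_ae_zero_of_mul_ae_zero (hqint k) ?_
    filter_upwards [hwφ k, huw'] with x hwx huwx
    have hwx' : w x * (μ[((B ∩ {x | |w' x| ≤ (k : ℝ)}).indicator fun x => u x * w' x)|m]) x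
        = 0 := hwx
    by_cases hxA : x ∈ B ∩ {x | |w' x| ≤ (k : ℝ)}
    · show ((B ∩ {x | |w' x| ≤ (k : ℝ)}).indicator fun x => u x * w' x) x * _ = _
      rw [Set.indicator_of_mem hxA]
      have : (u x * w' x) *
          (μ[((B ∩ {x | |w' x| ≤ (k : ℝ)}).indicator fun x => u x * w' x)|m]) x
          = u x * (w x * (μ[((B ∩ {x | |w' x| ≤ (k : ℝ)}).indicator fun x => u x * w' x)|m]) x) := by
        rw [huwx]; ring
      rw [this, hwx', mul_zero]; rfl
    · show ((B ∩ {x | |w' x| ≤ (k : ℝ)}).indicator fun x => u x * w' x) x * _ = _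
      rw [Set.indicator_of_notMem hxA, zero_mul]; rfl
  -- step 2 : the set integrals of the conditional expectation of u*w over m-subsets of B vanish
  have hSint : ∀ S : Set X, MeasurableSet[m] S → S ⊆ B →
      ∫ x in S, (μ[fun y => u y * w y|m]) x ∂μ = 0 := by
    intro S hSm hSB
    have hS0 : ∀ k : ℕ,
        ∫ x in S, ((B ∩ {x | |w' x| ≤ (k : ℝ)}).indicator fun x => u x * w' x) x ∂μ = 0 := by
      intro k
      rw [← setIntegral_condExp hm (hqint k) hSm]
      exact integral_eq_zero_of_ae (ae_restrict_of_ae (hφ0 k))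
    have hlim : Tendsto
        (fun k : ℕ => ∫ x in S, ((B ∩ {x | |w' x| ≤ (k : ℝ)}).indicator fun x => u x * w' x) x ∂μ)
        atTop (𝓝 (∫ x in S, u x * w' x ∂μ)) := by
      refine tendsto_integral_of_dominated_convergence (fun x => |u x * w' x|)
        (fun k => (hqint k).1.restrict) huw'int.abs.restrict ?_ ?_
      · intro k
        filter_upwards with x
        have := norm_indicator_le_norm_self (s := B ∩ {x | |w' x| ≤ (k : ℝ)})
          (f := fun x => u x * w' x) x
        simpa only [Real.norm_eq_abs] using this
      · filter_upwards [ae_restrict_mem (hm _ hSm)] with x hxS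
        refine tendsto_atTop_of_eventually_const (i₀ := ⌈|w' x|⌉₊) fun n hn => ?_
        have hxA : x ∈ B ∩ {x | |w' x| ≤ (n : ℝ)} :=
          ⟨hSB hxS, (Nat.le_ceil _).trans (Nat.cast_le.2 hn)⟩
        rw [Set.indicator_of_mem hxA]
    have h1 : ∫ x in S, u x * w' x ∂μ = 0 := by
      have : Tendsto (fun _ : ℕ => (0 : ℝ)) atTop (𝓝 (∫ x in S, u x * w' x ∂μ)) := by
        refine hlim.congr fun k => ?_
        exact hS0 k
      exact tendsto_nhds_unique this tendsto_const_nhds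
    have h2 : ∫ x in S, u x * w x ∂μ = 0 := by
      rw [← h1]
      exact integral_congr_ae (ae_restrict_of_ae huw'.symm)
    rw [setIntegral_condExp hm hint hSm]
    exact h2
  -- step 3 : conclude
  have hBpfin : μ (B ∩ {x | 0 ≤ (μ[fun y => u y * w y|m]) x}) ≠ ∞ :=
    ((measure_mono inter_subset_left).trans_lt hBfin.lt_top).ne
  have hBnfin : μ (B ∩ {x | (μ[fun y => u y * w y|m]) x < 0}) ≠ ∞ :=
    ((measure_mono inter_subset_left).trans_lt hBfin.lt_top).ne
  have hhmeas : Measurable[m] (μ[fun y => u y * w y|m]) :=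
    stronglyMeasurable_condExp.measurable
  have hBpm : MeasurableSet[m] (B ∩ {x | 0 ≤ (μ[fun y => u y * w y|m]) x}) :=
    hBm.inter (measurableSet_le measurable_const hhmeas)
  have hBnm : MeasurableSet[m] (B ∩ {x | (μ[fun y => u y * w y|m]) x < 0}) :=
    hBm.inter (measurableSet_lt hhmeas measurable_const)
  have hBp0 : μ (B ∩ {x | 0 ≤ (μ[fun y => u y * w y|m]) x}) = 0 := by
    have hI := hSint _ hBpm inter_subset_left
    have hge : (1 : ℝ) * (μ (B ∩ {x | 0 ≤ (μ[fun y => u y * w y|m]) x})).toReal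
        ≤ ∫ x in B ∩ {x | 0 ≤ (μ[fun y => u y * w y|m]) x}, (μ[fun y => u y * w y|m]) x ∂μ := by
      refine setIntegral_ge_of_const_le_real (hm _ hBpm) hBpfin ?_ integrable_condExp.integrableOn
      intro x hx
      have h1 := hB1 x hx.1
      have h2 : 0 ≤ (μ[fun y => u y * w y|m]) x := hx.2
      rw [abs_of_nonneg h2] at h1; linarith
    rw [hI] at hge
    have h3 : (μ (B ∩ {x | 0 ≤ (μ[fun y => u y * w y|m]) x})).toReal = 0 := by
      have := ENNReal.toReal_nonneg (a := μ (B ∩ {x | 0 ≤ (μ[fun y => u y * w y|m]) x}))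
      linarith
    exact ((ENNReal.toReal_eq_zero_iff _).1 h3).resolve_right hBpfin
  have hBn0 : μ (B ∩ {x | (μ[fun y => u y * w y|m]) x < 0}) = 0 := by
    have hI := hSint _ hBnm inter_subset_left
    have hge : (1 : ℝ) * (μ (B ∩ {x | (μ[fun y => u y * w y|m]) x < 0})).toReal
        ≤ ∫ x in B ∩ {x | (μ[fun y => u y * w y|m]) x < 0}, -(μ[fun y => u y * w y|m]) x ∂μ := by
      refine setIntegral_ge_of_const_le_real (hm _ hBnm) hBnfin ?_
        integrable_condExp.neg.integrableOn
      intro x hx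
      have h1 := hB1 x hx.1
      have h2 : (μ[fun y => u y * w y|m]) x < 0 := hx.2
      rw [abs_of_neg h2] at h1; linarith
    rw [integral_neg, hI, neg_zero] at hge
    have h3 : (μ (B ∩ {x | (μ[fun y => u y * w y|m]) x < 0})).toReal = 0 := by
      have := ENNReal.toReal_nonneg (a := μ (B ∩ {x | (μ[fun y => u y * w y|m]) x < 0}))
      linarith
    exact ((ENNReal.toReal_eq_zero_iff _).1 h3).resolve_right hBnfin
  have hsub : B ⊆ (B ∩ {x | 0 ≤ (μ[fun y => u y * w y|m]) x})
      ∪ (B ∩ {x | (μ[fun y => u y * w y|m]) x < 0}) := by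
    intro x hx
    rcases le_or_gt 0 ((μ[fun y => u y * w y|m]) x) with h0 | h0
    · exact Or.inl ⟨hx, h0⟩
    · exact Or.inr ⟨hx, h0⟩
  exact measure_mono_null hsub (measure_union_null hBp0 hBn0)

private lemma one_div_le_aux {a : ℝ} (ha : 0 < a) {n mm : ℕ} (h : 1 / a < n) (hnm : n ≤ mm) :
    1 / ((mm : ℝ) + 1) ≤ a := by
  have h1 : 1 / a < (mm : ℝ) + 1 := by
    refine lt_of_lt_of_le h ?_
    have : (n : ℝ) ≤ (mm : ℝ) := Nat.cast_le.2 hnm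
    linarith
  have hm1 : 0 < (mm : ℝ) + 1 := by positivity
  rw [div_lt_iff₀ ha] at h1
  rw [div_le_iff₀ hm1]
  nlinarith

theorem wce_power_bounded_necessary {X : Type*} {m m0 : MeasurableSpace X} (hm : m ≤ m0)
    (μ : Measure X) [μ.IsComplete] [SigmaFinite μ] [SigmaFinite (μ.trim hm)]
    (u w : X → ℝ) (p : ℝ≥0∞) [Fact (1 ≤ p)]
    (T : Lp ℝ p μ →L[ℝ] Lp ℝ p μ)
    (hT : ∀ f : Lp ℝ p μ, (T f : X → ℝ) =ᵐ[μ]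
      fun x => w x * (μ[fun y => u y * (f : X → ℝ) y | m]) x)
    (hT0 : T ≠ 0)
    (hpb : ∃ C : ℝ, ∀ n : ℕ, ‖T ^ n‖ ≤ C) :
    ∀ᵐ x ∂μ, |(μ[fun y => u y * w y | m]) x| ≤ 1 := by
  classical
  by_cases hint : Integrable (fun y => u y * w y) μ
  swap
  · rw [condExp_of_not_integrable hint]
    filter_upwards with x
    simp
  by_contra hcon
  rw [ae_iff] at hcon
  simp only [not_le] at hcon
  -- measurability of the conditional expectation h := μ[u*w|m]
  have hhm : StronglyMeasurable[m] (μ[fun y => u y * w y|m]) := stronglyMeasurable_condExp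
  have hhmeas : Measurable[m] (μ[fun y => u y * w y|m]) := hhm.measurable
  have hhmeas0 : Measurable (μ[fun y => u y * w y|m]) := (hhm.mono hm).measurable
  -- choose a bound M and a finite-measure m-measurable set B where 1 < |h| ≤ M
  obtain ⟨M, hM⟩ : ∃ M : ℕ, μ ({x | 1 < |(μ[fun y => u y * w y|m]) x|}
      ∩ {x | |(μ[fun y => u y * w y|m]) x| ≤ (M : ℝ)}) ≠ 0 := by
    by_contra hall
    push_neg at hall
    apply hcon
    refine measure_mono_null (fun x hx => ?_) (measure_iUnion_null hall)
    rcases exists_nat_ge (|(μ[fun y => u y * w y|m]) x|) with ⟨M, hMx⟩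
    exact mem_iUnion.2 ⟨M, hx, hMx⟩
  obtain ⟨j0, hj0⟩ : ∃ j : ℕ, μ ({x | 1 < |(μ[fun y => u y * w y|m]) x|}
      ∩ {x | |(μ[fun y => u y * w y|m]) x| ≤ (M : ℝ)} ∩ spanningSets (μ.trim hm) j) ≠ 0 := by
    by_contra hall
    push_neg at hall
    apply hM
    refine measure_mono_null (fun x hx => ?_) (measure_iUnion_null hall)
    have hx' : x ∈ ⋃ j, spanningSets (μ.trim hm) j := by
      rw [iUnion_spanningSets]; trivial
    rcases mem_iUnion.1 hx' with ⟨j, hj⟩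
    exact mem_iUnion.2 ⟨j, hx, hj⟩
  set B : Set X := {x | 1 < |(μ[fun y => u y * w y|m]) x|}
      ∩ {x | |(μ[fun y => u y * w y|m]) x| ≤ (M : ℝ)} ∩ spanningSets (μ.trim hm) j0 with hBdef
  have hBm : MeasurableSet[m] B :=
    ((mset_lt_abs hhmeas 1).inter (mset_abs_le hhmeas M)).inter
      (measurableSet_spanningSets (μ.trim hm) j0)
  have hB0 : μ B ≠ 0 := hj0
  have hBfin : μ B ≠ ∞ := by
    have h1 : μ B ≤ μ.trim hm (spanningSets (μ.trim hm) j0) := by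
      rw [trim_measurableSet_eq hm (measurableSet_spanningSets _ _)]
      exact measure_mono inter_subset_right
    exact (h1.trans_lt (measure_spanningSets_lt_top _ _)).ne
  have hBh : ∀ x ∈ B, 1 < |(μ[fun y => u y * w y|m]) x|
      ∧ |(μ[fun y => u y * w y|m]) x| ≤ (M : ℝ) := fun x hx => ⟨hx.1.1, hx.1.2⟩
  -- a nonzero vector for T, and integrability of u * g for all g in Lp
  obtain ⟨f₀, hf₀⟩ : ∃ f : Lp ℝ p μ, T f ≠ 0 := by
    by_contra hall
    push_neg at hall
    exact hT0 (ContinuousLinearMap.ext fun f => by simp [hall f])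
  have hTzero_of : ∀ f : Lp ℝ p μ, ¬Integrable (fun y => u y * (f : X → ℝ) y) μ → T f = 0 := by
    intro f hf
    rw [Lp.eq_zero_iff_ae_eq_zero]
    refine (hT f).trans ?_
    rw [condExp_of_not_integrable hf]
    filter_upwards with x
    simp
  have hf₀int : Integrable (fun y => u y * (f₀ : X → ℝ) y) μ := by
    by_contra hni
    exact hf₀ (hTzero_of f₀ hni)
  have hallint : ∀ f : Lp ℝ p μ, Integrable (fun y => u y * (f : X → ℝ) y) μ := by
    intro g
    by_contra hg
    have hsum : ¬Integrable (fun y => u y * ((f₀ + g : Lp ℝ p μ) : X → ℝ) y) μ := by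
      intro hs
      apply hg
      have hcong : (fun y => u y * ((f₀ + g : Lp ℝ p μ) : X → ℝ) y) =ᵐ[μ]
          fun y => u y * (f₀ : X → ℝ) y + u y * (g : X → ℝ) y := by
        filter_upwards [Lp.coeFn_add f₀ g] with y hy
        rw [hy]; simp [mul_add]
      have hs' := (hs.congr hcong).sub hf₀int
      refine hs'.congr ?_
      filter_upwards with y
      simp only [Pi.sub_apply]
      ring
    have h1 : T (f₀ + g) = 0 := hTzero_of _ hsum
    have h2 : T g = 0 := hTzero_of _ hg
    have h3 : T f₀ + T g = 0 := by rw [← map_add, h1]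
    rw [h2, add_zero] at h3
    exact hf₀ h3
  -- u is a.e. strongly measurable
  have hu : AEStronglyMeasurable u μ := by
    have hmk : ∀ n : ℕ, AEStronglyMeasurable
        (fun x => u x * (spanningSets μ n).indicator (fun _ => (1 : ℝ)) x) μ := by
      intro n
      have hi := hallint (indicatorConstLp p (measurableSet_spanningSets μ n)
        (measure_spanningSets_lt_top μ n).ne (1 : ℝ))
      refine (hi.congr ?_).1
      filter_upwards [indicatorConstLp_coeFn (p := p) (μ := μ)
        (hs := measurableSet_spanningSets μ n) (hμs := (measure_spanningSets_lt_top μ n).ne)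
        (c := (1 : ℝ))] with x hx
      rw [hx]
    refine aestronglyMeasurable_of_tendsto_ae atTop hmk ?_
    filter_upwards with x
    have hx : x ∈ ⋃ n, spanningSets μ n := by rw [iUnion_spanningSets]; trivial
    rcases mem_iUnion.1 hx with ⟨N, hN⟩
    refine tendsto_atTop_of_eventually_const (i₀ := N) fun n hn => ?_
    have hmem : x ∈ spanningSets μ n := monotone_spanningSets μ hn hN
    simp [Set.indicator_of_mem hmem]
  -- measurable versions
  have hrm : StronglyMeasurable[m0] (hint.1.mk (fun y => u y * w y)) :=
    hint.1.stronglyMeasurable_mk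
  have hr_ae : (fun y => u y * w y) =ᵐ[μ] hint.1.mk (fun y => u y * w y) := hint.1.ae_eq_mk
  have hu'm : StronglyMeasurable[m0] (hu.mk u) := hu.stronglyMeasurable_mk
  have huu' : u =ᵐ[μ] hu.mk u := hu.ae_eq_mk
  set w' : X → ℝ := fun x => hint.1.mk (fun y => u y * w y) x / hu.mk u x with hw'def
  have hw'meas : Measurable[m0] w' := hrm.measurable.div hu'm.measurable
  have huw' : (fun x => u x * w' x) =ᵐ[μ] fun x => u x * w x := by
    filter_upwards [hr_ae, huu'] with x h1 h2
    by_cases h0 : u x = 0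
    · simp [hw'def, h0]
    · have hu'x : hu.mk u x = u x := h2.symm
      show u x * (hint.1.mk _ x / hu.mk u x) = u x * w x
      rw [hu'x, ← h1]
      field_simp
  have huw'int : Integrable (fun x => u x * w' x) μ := hint.congr huw'.symm
  -- the truncated test functions
  have hAkm0 : ∀ k : ℕ, MeasurableSet (B ∩ {x | |w' x| ≤ (k : ℝ)}) := fun k =>
    (hm _ hBm).inter (measurableSet_le hw'meas.abs measurable_const)
  have hqint : ∀ k : ℕ,
      Integrable ((B ∩ {x | |w' x| ≤ (k : ℝ)}).indicator fun x => u x * w' x) μ := fun k =>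
    huw'int.indicator (hAkm0 k)
  have hDm : ∀ k N : ℕ, MeasurableSet[m]
      {x | |(μ[((B ∩ {x | |w' x| ≤ (k : ℝ)}).indicator fun x => u x * w' x)|m]) x| ≤ (N : ℝ)} :=
    fun k N => mset_abs_le stronglyMeasurable_condExp.measurable _
  have hg0mem : ∀ k N : ℕ, MemLp
      ({x | |(μ[((B ∩ {x | |w' x| ≤ (k : ℝ)}).indicator fun x => u x * w' x)|m]) x| ≤ (N : ℝ)}.indicator
        ((B ∩ {x | |w' x| ≤ (k : ℝ)}).indicator w')) p μ := by
    intro k N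
    refine MemLp.of_le (memLp_indicator_const p (hAkm0 k) ((k : ℝ)) (Or.inr ?_)) ?_ ?_
    · exact ((measure_mono inter_subset_left).trans_lt hBfin.lt_top).ne
    · exact ((hw'meas.indicator (hAkm0 k)).indicator (hm _ (hDm k N))).aestronglyMeasurable
    · filter_upwards with x
      by_cases hxD : x ∈ {x | |(μ[((B ∩ {x | |w' x| ≤ (k : ℝ)}).indicator fun x => u x * w' x)|m]) x| ≤ (N : ℝ)}
      · rw [Set.indicator_of_mem hxD]
        by_cases hxA : x ∈ B ∩ {x | |w' x| ≤ (k : ℝ)}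
        · rw [Set.indicator_of_mem hxA, Set.indicator_of_mem hxA]
          simp only [Real.norm_eq_abs]
          rw [abs_of_nonneg (show (0 : ℝ) ≤ (k : ℝ) from Nat.cast_nonneg k)]
          exact hxA.2
        · rw [Set.indicator_of_notMem hxA, Set.indicator_of_notMem hxA]
      · rw [Set.indicator_of_notMem hxD]
        simp
  -- the condexp computation for the test functions
  have hcond : ∀ k N : ℕ,
      (μ[fun y => u y * (((hg0mem k N).toLp _ : Lp ℝ p μ) : X → ℝ) y|m]) =ᵐ[μ]
      {x | |(μ[((B ∩ {x | |w' x| ≤ (k : ℝ)}).indicator fun x => u x * w' x)|m]) x| ≤ (N : ℝ)}.indicator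
        (μ[((B ∩ {x | |w' x| ≤ (k : ℝ)}).indicator fun x => u x * w' x)|m]) := by
    intro k N
    have h1 : (fun y => u y * (((hg0mem k N).toLp _ : Lp ℝ p μ) : X → ℝ) y) =ᵐ[μ]
        {x | |(μ[((B ∩ {x | |w' x| ≤ (k : ℝ)}).indicator fun x => u x * w' x)|m]) x| ≤ (N : ℝ)}.indicator
          ((B ∩ {x | |w' x| ≤ (k : ℝ)}).indicator fun x => u x * w' x) := by
      filter_upwards [(hg0mem k N).coeFn_toLp] with y hy
      rw [hy]
      by_cases hyD : y ∈ {x | |(μ[((B ∩ {x | |w' x| ≤ (k : ℝ)}).indicator fun x => u x * w' x)|m]) x| ≤ (N : ℝ)}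
      · rw [Set.indicator_of_mem hyD, Set.indicator_of_mem hyD]
        by_cases hyA : y ∈ B ∩ {x | |w' x| ≤ (k : ℝ)}
        · rw [Set.indicator_of_mem hyA, Set.indicator_of_mem hyA]
        · rw [Set.indicator_of_notMem hyA, Set.indicator_of_notMem hyA, mul_zero]
      · rw [Set.indicator_of_notMem hyD, Set.indicator_of_notMem hyD, mul_zero]
    refine (condExp_congr_ae h1).trans ?_
    exact condExp_indicator (hqint k) (hDm k N)
  have hTg0 : ∀ k N : ℕ, (T ((hg0mem k N).toLp _) : X → ℝ) =ᵐ[μ] fun x =>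
      w x * ({x | |(μ[((B ∩ {x | |w' x| ≤ (k : ℝ)}).indicator fun x => u x * w' x)|m]) x| ≤ (N : ℝ)}.indicator
        (μ[((B ∩ {x | |w' x| ≤ (k : ℝ)}).indicator fun x => u x * w' x)|m])) x := by
    intro k N
    refine (hT _).trans ?_
    filter_upwards [hcond k N] with x hx
    rw [hx]
  -- existence of k, N with T g₀ ≠ 0
  obtain ⟨k, N, hg1ne⟩ : ∃ k N : ℕ, T ((hg0mem k N).toLp _) ≠ 0 := by
    by_contra hall
    push_neg at hall
    have hwφ : ∀ k : ℕ, (fun x =>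
        w x * (μ[((B ∩ {x | |w' x| ≤ (k : ℝ)}).indicator fun x => u x * w' x)|m]) x) =ᵐ[μ] 0 := by
      intro k
      have hN : ∀ N : ℕ, ∀ᵐ x ∂μ,
          w x * ({x | |(μ[((B ∩ {x | |w' x| ≤ (k : ℝ)}).indicator fun x => u x * w' x)|m]) x| ≤ (N : ℝ)}.indicator
            (μ[((B ∩ {x | |w' x| ≤ (k : ℝ)}).indicator fun x => u x * w' x)|m])) x = 0 := by
        intro N
        have h0 : (T ((hg0mem k N).toLp _) : X → ℝ) =ᵐ[μ] 0 := by
          rw [hall k N]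
          exact Lp.coeFn_zero ℝ p μ
        filter_upwards [(hTg0 k N).symm.trans h0] with x hx
        simpa using hx
      have := ae_all_iff.2 hN
      filter_upwards [this] with x hx
      rcases exists_nat_ge
        (|(μ[((B ∩ {x | |w' x| ≤ (k : ℝ)}).indicator fun x => u x * w' x)|m]) x|) with ⟨N, hNx⟩
      have hxD : x ∈ {x | |(μ[((B ∩ {x | |w' x| ≤ (k : ℝ)}).indicator fun x => u x * w' x)|m]) x| ≤ (N : ℝ)} := hNx
      have := hx N
      rwa [Set.indicator_of_mem hxD] at this
    have hB00 : μ B = 0 :=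
      measure_eq_zero_of_wmul_ae_zero hm μ u w w' B hw'meas hint huw' hBm hBfin hwφ
        fun x hx => (hBh x hx).1
    exact hB0 hB00
  -- notation for the fixed k, N
  have hg1 : (T ((hg0mem k N).toLp _) : X → ℝ) =ᵐ[μ] fun x =>
      w x * ({x | |(μ[((B ∩ {x | |w' x| ≤ (k : ℝ)}).indicator fun x => u x * w' x)|m]) x| ≤ (N : ℝ)}.indicator
        (μ[((B ∩ {x | |w' x| ≤ (k : ℝ)}).indicator fun x => u x * w' x)|m])) x := hTg0 k N
  set ψ : X → ℝ :=
    {x | |(μ[((B ∩ {x | |w' x| ≤ (k : ℝ)}).indicator fun x => u x * w' x)|m]) x| ≤ (N : ℝ)}.indicator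
      (μ[((B ∩ {x | |w' x| ≤ (k : ℝ)}).indicator fun x => u x * w' x)|m]) with hψdef
  set g1 : Lp ℝ p μ := T ((hg0mem k N).toLp _) with hg1def
  -- bound and support of ψ
  have hψbd : ∀ x, |ψ x| ≤ (N : ℝ) := by
    intro x
    by_cases hx : x ∈ {x | |(μ[((B ∩ {x | |w' x| ≤ (k : ℝ)}).indicator fun x => u x * w' x)|m]) x| ≤ (N : ℝ)}
    · rw [hψdef, Set.indicator_of_mem hx]
      exact hx
    · rw [hψdef, Set.indicator_of_notMem hx]
      simp
  have hqB : ((B ∩ {x | |w' x| ≤ (k : ℝ)}).indicator fun x => u x * w' x)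
      = B.indicator ({x | |w' x| ≤ (k : ℝ)}.indicator fun x => u x * w' x) := by
    ext x
    by_cases h1 : x ∈ B <;> by_cases h2 : x ∈ {x | |w' x| ≤ (k : ℝ)} <;>
      simp [Set.indicator_apply, h1, h2, Set.mem_inter_iff]
  have hφB : μ[((B ∩ {x | |w' x| ≤ (k : ℝ)}).indicator fun x => u x * w' x)|m] =ᵐ[μ]
      B.indicator (μ[({x | |w' x| ≤ (k : ℝ)}.indicator fun x => u x * w' x)|m]) := by
    rw [hqB]
    exact condExp_indicator (huw'int.indicator (mset_abs_le hw'meas k)) hBm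
  have hψsupp : ∀ᵐ x ∂μ, ψ x ≠ 0 → 1 < |(μ[fun y => u y * w y|m]) x|
      ∧ |(μ[fun y => u y * w y|m]) x| ≤ (M : ℝ) := by
    filter_upwards [hφB] with x hx hne
    have hφne : (μ[((B ∩ {x | |w' x| ≤ (k : ℝ)}).indicator fun x => u x * w' x)|m]) x ≠ 0 := by
      intro h0
      apply hne
      rw [hψdef]
      by_cases hxD : x ∈ {x | |(μ[((B ∩ {x | |w' x| ≤ (k : ℝ)}).indicator fun x => u x * w' x)|m]) x| ≤ (N : ℝ)}
      · rw [Set.indicator_of_mem hxD]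
        exact h0
      · rw [Set.indicator_of_notMem hxD]
    rw [hx] at hφne
    by_cases hxB : x ∈ B
    · exact hBh x hxB
    · rw [Set.indicator_of_notMem hxB] at hφne
      exact absurd rfl hφne
  have hψm : StronglyMeasurable[m] ψ := stronglyMeasurable_condExp.indicator (hDm k N)
  -- the iterates of T on g1
  have hiter : ∀ n : ℕ, (((T ^ n) g1 : Lp ℝ p μ) : X → ℝ) =ᵐ[μ]
      fun x => (μ[fun y => u y * w y|m]) x ^ n * (w x * ψ x) := by
    intro n
    induction n with
    | zero =>
      have h0 : (T ^ 0) g1 = g1 := by rw [pow_zero]; rfl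
      rw [h0]
      filter_upwards [hg1] with x hx
      rw [hx, pow_zero, one_mul]
    | succ n ih =>
      have hstep : (T ^ (n + 1)) g1 = T ((T ^ n) g1) := by
        rw [pow_succ']
        rfl
      rw [hstep]
      refine (hT _).trans ?_
      have hinner : (fun y => u y * (((T ^ n) g1 : Lp ℝ p μ) : X → ℝ) y) =ᵐ[μ]
          (fun y => (μ[fun y => u y * w y|m]) y ^ n * ψ y) * fun y => u y * w y := by
        filter_upwards [ih] with y hy
        show u y * _ = _
        rw [hy]
        show u y * ((μ[fun y => u y * w y|m]) y ^ n * (w y * ψ y))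
          = (μ[fun y => u y * w y|m]) y ^ n * ψ y * (u y * w y)
        ring
      have hfm : StronglyMeasurable[m] fun y => (μ[fun y => u y * w y|m]) y ^ n * ψ y :=
        ((hhmeas.pow_const n).mul hψm.measurable).stronglyMeasurable
      have hprodb : ∀ᵐ y ∂μ,
          ‖((fun y => (μ[fun y => u y * w y|m]) y ^ n * ψ y) * fun y => u y * w y) y‖
          ≤ (M : ℝ) ^ n * (N : ℝ) * |u y * w y| := by
        filter_upwards [hψsupp] with y hy
        simp only [Pi.mul_apply, Real.norm_eq_abs]
        by_cases h0 : ψ y = 0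
        · rw [h0]
          simp only [mul_zero, zero_mul, abs_zero]
          positivity
        · obtain ⟨h1, h2⟩ := hy h0
          rw [abs_mul, abs_mul, abs_pow]
          have hb1 : |(μ[fun y => u y * w y|m]) y| ^ n ≤ (M : ℝ) ^ n :=
            pow_le_pow_left₀ (abs_nonneg _) h2 n
          have hb2 := hψbd y
          have hb3 := abs_nonneg (u y * w y)
          have hb4 := abs_nonneg (ψ y)
          have hMn : (0 : ℝ) ≤ (M : ℝ) ^ n := pow_nonneg (Nat.cast_nonneg M) n
          have step1 : |(μ[fun y => u y * w y|m]) y| ^ n * |ψ y| ≤ (M : ℝ) ^ n * (N : ℝ) :=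
            mul_le_mul hb1 hb2 hb4 hMn
          exact mul_le_mul_of_nonneg_right step1 hb3
      have hprodint : Integrable
          ((fun y => (μ[fun y => u y * w y|m]) y ^ n * ψ y) * fun y => u y * w y) μ := by
        refine Integrable.mono' (hint.abs.const_mul ((M : ℝ) ^ n * (N : ℝ))) ?_ hprodb
        exact ((((hhmeas0.pow_const n).mul
          (hψm.mono hm).measurable).aestronglyMeasurable).mul hint.1)
      have hpull := condExp_mul_of_stronglyMeasurable_left hfm hprodint hint
      have hcongr := condExp_congr_ae (m := m) (μ := μ) hinner
      filter_upwards [hcongr.trans hpull] with x hx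
      rw [hx]
      simp only [Pi.mul_apply]
      ring
  -- final contradiction via power boundedness
  obtain ⟨C, hC⟩ := hpb
  have hp0 : p ≠ 0 := (lt_of_lt_of_le zero_lt_one Fact.out).ne'
  have hg1m : StronglyMeasurable (g1 : X → ℝ) := Lp.stronglyMeasurable g1
  have hZ : μ {x | (g1 : X → ℝ) x ≠ 0} ≠ 0 := by
    intro h0
    refine hg1ne (Lp.eq_zero_iff_ae_eq_zero.2 (ae_iff.2 ?_))
    simpa only [Pi.zero_apply, ne_eq] using h0
  set SS : ℕ → Set X := fun j => {x | 1 / ((j : ℝ) + 1) ≤ |(g1 : X → ℝ) x|}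
      ∩ {x | 1 + 1 / ((j : ℝ) + 1) ≤ |(μ[fun y => u y * w y|m]) x|} ∩ spanningSets μ j
      with hSSdef
  obtain ⟨j, hj⟩ : ∃ j : ℕ, μ (SS j) ≠ 0 := by
    by_contra hall
    push_neg at hall
    apply hZ
    have hsub : ∀ᵐ x ∂μ, (g1 : X → ℝ) x ≠ 0 → x ∈ ⋃ j : ℕ, SS j := by
      filter_upwards [hg1, hψsupp] with x hx1 hx2 hne
      have hψne : ψ x ≠ 0 := by
        intro h0
        rw [hx1, h0, mul_zero] at hne
        exact hne rfl
      have hh1 : 1 < |(μ[fun y => u y * w y|m]) x| := (hx2 hψne).1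
      have hg1pos : 0 < |(g1 : X → ℝ) x| := abs_pos.2 hne
      obtain ⟨j1, hj1⟩ := exists_nat_gt (1 / |(g1 : X → ℝ) x|)
      obtain ⟨j2, hj2⟩ := exists_nat_gt (1 / (|(μ[fun y => u y * w y|m]) x| - 1))
      have hx3 : x ∈ ⋃ i : ℕ, spanningSets μ i := by rw [iUnion_spanningSets]; trivial
      obtain ⟨j3, hj3⟩ := mem_iUnion.1 hx3
      refine mem_iUnion.2 ⟨max (max j1 j2) j3, ⟨?_, ?_⟩, ?_⟩
      · exact one_div_le_aux (mm := max (max j1 j2) j3) hg1pos hj1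
          (le_max_of_le_left (le_max_left _ _))
      · have := one_div_le_aux (mm := max (max j1 j2) j3) (by linarith : (0:ℝ) < |(μ[fun y => u y * w y|m]) x| - 1) hj2
          (le_max_of_le_left (le_max_right _ _))
        simp only [Set.mem_setOf_eq]
        push_cast at this ⊢
        linarith
      · exact monotone_spanningSets μ (le_max_right _ _) hj3
    have h1 := ae_iff.1 hsub
    have h2 : μ (⋃ j : ℕ, SS j) = 0 := measure_iUnion_null hall
    refine measure_mono_null (fun x hx => ?_) (measure_union_null h1 h2)
    by_cases hximp : (g1 : X → ℝ) x ≠ 0 → x ∈ ⋃ j : ℕ, SS j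
    · exact Or.inr (hximp hx)
    · exact Or.inl hximp
  have hSm : MeasurableSet (SS j) :=
    ((mset_le_abs hg1m.measurable _).inter (mset_le_abs hhmeas0 _)).inter
      (measurableSet_spanningSets μ j)
  have hSfin : μ (SS j) ≠ ∞ :=
    ((measure_mono inter_subset_right).trans_lt (measure_spanningSets_lt_top μ j)).ne
  have hη : 0 < 1 / ((j : ℝ) + 1) := by positivity
  have hδ : 1 < 1 + 1 / ((j : ℝ) + 1) := by linarith
  have hK0 : (μ (SS j)) ^ (1 / p.toReal) ≠ 0 := by
    intro h0
    rcases ENNReal.rpow_eq_zero_iff.1 h0 with ⟨h1, _⟩ | ⟨h1, _⟩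
    · exact hj h1
    · exact hSfin h1
  have hKtop : (μ (SS j)) ^ (1 / p.toReal) ≠ ∞ := by
    intro h0
    rcases ENNReal.rpow_eq_top_iff.1 h0 with ⟨h1, _⟩ | ⟨h1, _⟩
    · exact hj h1
    · exact hSfin h1
  have hbound : ∀ n : ℕ,
      ENNReal.ofReal ((1 + 1 / ((j : ℝ) + 1)) ^ n * (1 / ((j : ℝ) + 1)))
        * (μ (SS j)) ^ (1 / p.toReal) ≤ ENNReal.ofReal (C * ‖g1‖) := by
    intro n
    have hcn : (0 : ℝ) ≤ (1 + 1 / ((j : ℝ) + 1)) ^ n * (1 / ((j : ℝ) + 1)) := by positivity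
    have hmono : eLpNorm ((SS j).indicator
          fun _ => (1 + 1 / ((j : ℝ) + 1)) ^ n * (1 / ((j : ℝ) + 1))) p μ ≤
        eLpNorm (fun x => (μ[fun y => u y * w y|m]) x ^ n * (w x * ψ x)) p μ := by
      refine eLpNorm_mono_ae ?_
      filter_upwards [hg1] with x hx
      by_cases hxS : x ∈ SS j
      · rw [Set.indicator_of_mem hxS]
        have h1 : 1 / ((j : ℝ) + 1) ≤ |(g1 : X → ℝ) x| := hxS.1.1
        have h2 : 1 + 1 / ((j : ℝ) + 1) ≤ |(μ[fun y => u y * w y|m]) x| := hxS.1.2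
        simp only [Real.norm_eq_abs]
        rw [abs_of_nonneg hcn, abs_mul, abs_pow]
        have h3 : |w x * ψ x| = |(g1 : X → ℝ) x| := by rw [hx]
        rw [h3]
        have h4 : (1 + 1 / ((j : ℝ) + 1)) ^ n ≤ |(μ[fun y => u y * w y|m]) x| ^ n :=
          pow_le_pow_left₀ (by linarith) h2 n
        nlinarith [abs_nonneg ((g1 : X → ℝ) x),
          pow_nonneg (show (0 : ℝ) ≤ 1 + 1 / ((j : ℝ) + 1) by linarith) n]
      · rw [Set.indicator_of_notMem hxS]
        simp only [norm_zero, Real.norm_eq_abs, abs_mul, abs_pow]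
        positivity
    rw [eLpNorm_indicator_const' hSm hj hp0] at hmono
    have heq2 : eLpNorm (fun x => (μ[fun y => u y * w y|m]) x ^ n * (w x * ψ x)) p μ
        = (‖(T ^ n) g1‖₊ : ℝ≥0∞) := by
      rw [← eLpNorm_congr_ae (hiter n), Lp.nnnorm_def,
        ENNReal.coe_toNNReal (Lp.eLpNorm_ne_top _)]
    rw [heq2] at hmono
    have hnn : (‖(1 + 1 / ((j : ℝ) + 1)) ^ n * (1 / ((j : ℝ) + 1))‖₊ : ℝ≥0∞)
        = ENNReal.ofReal ((1 + 1 / ((j : ℝ) + 1)) ^ n * (1 / ((j : ℝ) + 1))) := by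
      rw [← enorm_eq_nnnorm, ← ofReal_norm, Real.norm_eq_abs, abs_of_nonneg hcn]
    rw [enorm_eq_nnnorm, hnn] at hmono
    refine hmono.trans ?_
    have hop : ‖(T ^ n) g1‖ ≤ C * ‖g1‖ :=
      le_trans ((T ^ n).le_opNorm g1) (mul_le_mul_of_nonneg_right (hC n) (norm_nonneg _))
    calc (‖(T ^ n) g1‖₊ : ℝ≥0∞) = ENNReal.ofReal ‖(T ^ n) g1‖ :=
          (ofReal_norm _).symm
    _ ≤ ENNReal.ofReal (C * ‖g1‖) := ENNReal.ofReal_le_ofReal hop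
  have hR : ∀ n : ℕ, (1 + 1 / ((j : ℝ) + 1)) ^ n * (1 / ((j : ℝ) + 1))
      ≤ (ENNReal.ofReal (C * ‖g1‖) / (μ (SS j)) ^ (1 / p.toReal)).toReal := by
    intro n
    have h1 := (ENNReal.le_div_iff_mul_le (Or.inl hK0) (Or.inl hKtop)).2 (hbound n)
    have h2 : ENNReal.ofReal (C * ‖g1‖) / (μ (SS j)) ^ (1 / p.toReal) ≠ ∞ :=
      (ENNReal.div_lt_top ENNReal.ofReal_ne_top hK0).ne
    have h3 := ENNReal.toReal_mono h2 h1
    rwa [ENNReal.toReal_ofReal (by positivity)] at h3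
  obtain ⟨n, hn⟩ := ((tendsto_pow_atTop_atTop_of_one_lt hδ).eventually_gt_atTop
    ((ENNReal.ofReal (C * ‖g1‖) / (μ (SS j)) ^ (1 / p.toReal)).toReal
      / (1 / ((j : ℝ) + 1)))).exists
  have hcontra := hR n
  rw [div_lt_iff₀ hη] at hn
  linarith
end
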